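/- Nash-equilibrium utilities in the symmetric resource-sharing game with an adamant player: let k ≥ 1, λ > 0, η > 0, γ > 0, and â > (k+1)/γ. Consider the (k+1)-player game with players 0, 1, …, k, where player 0 has influence factor λ₀ = ηλ and players 1, …, k have influence factor λ, each choosing an action b_m ∈ [0, â], with payoffs φ_m(b) = λ_m b_m / (∑_{j=0}^{k} λ_j b_j) − γ b_m. Then at every Nash equilibrium b with ∑_j λ_j b_j > 0, the payoffs are: for each m ∈ {1, …, k}, φ_m(b) = 1/(1 + kη)² if η > (k−1)/k, and φ_m(b) = 1/k² otherwise; and φ₀(b) = ((1 − k + kη)/(1 + kη))² if η > (k−1)/k, and φ₀(b) = 0 otherwise. -/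

import Mathlib

/-- Payoff of player `m` in the resource-sharing game among the players `0, …, n − 1`
with influence factors `lamInf` and cost factor `γ`:
`φ_m(b) = lamInf m * b m / (∑_{j<n} lamInf j * b j) − γ * b m`. -/
noncomputable def rsgPayoff (n : ℕ) (lamInf : ℕ → ℝ) (γ : ℝ) (b : ℕ → ℝ) (m : ℕ) : ℝ :=
  lamInf m * b m / (∑ j ∈ Finset.range n, lamInf j * b j) - γ * b m

/-- A Nash equilibrium of the resource-sharing game with actions in `[0, â]`: no player
`m < n` can strictly increase its payoff by unilaterally changing its action. -/
def IsNashRSG (n : ℕ) (lamInf : ℕ → ℝ) (γ ahat : ℝ) (b : ℕ → ℝ) : Prop :=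
  ∀ m < n, ∀ x ∈ Set.Icc (0 : ℝ) ahat,
    rsgPayoff n lamInf γ (Function.update b m x) m ≤ rsgPayoff n lamInf γ b m

lemma foc_zero (A c γ ahat : ℝ) (hA : 0 < A) (hc : 0 < c) (hγ : 0 < γ)
    (hahat : 0 < ahat)
    (hmax : ∀ x ∈ Set.Icc (0:ℝ) ahat, A*x/(c+A*x) - γ*x ≤ 0) : A ≤ γ*c := by
  by_contra h
  push_neg at h
  set x := min ahat ((A - γ*c)/(2*γ*A)) with hxdef
  have hx0 : 0 < x := lt_min hahat (div_pos (by linarith) (by positivity))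
  have hxa : x ≤ ahat := min_le_left _ _
  have hx2 : x ≤ (A - γ*c)/(2*γ*A) := min_le_right _ _
  have hden : 0 < c + A*x := by positivity
  have hkey : γ*x*(c+A*x) < A*x := by
    have h2 : 2*γ*A*x ≤ A - γ*c := by
      rw [le_div_iff₀ (by positivity : (0:ℝ) < 2*γ*A)] at hx2
      linarith
    nlinarith [mul_pos hγ (mul_pos hA hx0)]
  have hlt : γ*x < A*x/(c+A*x) := (lt_div_iff₀ hden).mpr hkey
  have := hmax x ⟨hx0.le, hxa⟩
  linarith

lemma foc_interior (A c γ b ahat : ℝ) (hA : 0 < A) (hc : 0 < c) (hγ : 0 < γ)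
    (hb : 0 < b) (hba : b < ahat)
    (hmax : ∀ x ∈ Set.Icc (0:ℝ) ahat, A*x/(c+A*x) - γ*x ≤ A*b/(c+A*b) - γ*b) :
    A*c = γ*(c+A*b)^2 := by
  have hne : c + A*b ≠ 0 := by positivity
  have h1 : HasDerivAt (fun x : ℝ => A*x) A b := by
    simpa using (hasDerivAt_id b).const_mul A
  have h2 : HasDerivAt (fun x : ℝ => c + A*x) A b := h1.const_add c
  have hγ1 : HasDerivAt (fun x : ℝ => γ*x) γ b := by
    simpa using (hasDerivAt_id b).const_mul γ
  have h3 : HasDerivAt (fun x : ℝ => A*x/(c+A*x) - γ*x) (A*c/(c+A*b)^2 - γ) b := by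
    have h4 := (h1.div h2 hne).sub hγ1
    convert h4 using 1
    · rfl
    · rfl
    · rfl
    · ring
  have hloc : IsLocalMax (fun x : ℝ => A*x/(c+A*x) - γ*x) b :=
    IsMaxOn.isLocalMax (fun x hx => hmax x hx) (Icc_mem_nhds hb hba)
  have h0 : A*c/(c+A*b)^2 - γ = 0 := hloc.hasDerivAt_eq_zero h3
  have h5 : A*c/(c+A*b)^2 = γ := by linarith
  field_simp at h5
  linarith


/-- Nash-equilibrium utilities in the symmetric resource-sharing game with an adamant
player: players `0, 1, …, k`, player `0` (the adamant player) with influence factor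
`η·λ` and players `1, …, k` with influence factor `λ`, actions in `[0, â]` with
`â > (k+1)/γ`.  At every Nash equilibrium `b` with `∑_j λ_j b_j > 0`: for each
`1 ≤ m ≤ k`, `φ_m(b) = 1/(1 + kη)²` if `η > (k−1)/k` and `1/k²` otherwise, and
`φ₀(b) = ((1 − k + kη)/(1 + kη))²` if `η > (k−1)/k` and `0` otherwise. -/
theorem symmetric_rsg_nash_utilities (k : ℕ) (hk : 1 ≤ k)
    (lam η γ ahat : ℝ) (hlam : 0 < lam) (hη : 0 < η) (hγ : 0 < γ)
    (hahat : ((k : ℝ) + 1) / γ < ahat)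
    (lamInf : ℕ → ℝ) (hInf : ∀ m, lamInf m = if m = 0 then η * lam else lam)
    (b : ℕ → ℝ) (hb : ∀ m < k + 1, b m ∈ Set.Icc (0 : ℝ) ahat)
    (hNE : IsNashRSG (k + 1) lamInf γ ahat b)
    (hsum : 0 < ∑ j ∈ Finset.range (k + 1), lamInf j * b j) :
    (∀ m, 1 ≤ m → m ≤ k →
      rsgPayoff (k + 1) lamInf γ b m =
        if ((k : ℝ) - 1) / (k : ℝ) < η then 1 / (1 + (k : ℝ) * η) ^ 2
        else 1 / (k : ℝ) ^ 2) ∧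
    rsgPayoff (k + 1) lamInf γ b 0 =
      if ((k : ℝ) - 1) / (k : ℝ) < η then
        ((1 - (k : ℝ) + (k : ℝ) * η) / (1 + (k : ℝ) * η)) ^ 2
      else 0 := by
  have hkR : (1:ℝ) ≤ (k:ℝ) := by exact_mod_cast hk
  have hkpos : (0:ℝ) < (k:ℝ) := by linarith
  set S := ∑ j ∈ Finset.range (k+1), lamInf j * b j with hS
  have hahat0 : 0 < ahat := lt_trans (by positivity) hahat
  have hlamInf_pos : ∀ m, 0 < lamInf m := by
    intro m; rw [hInf]; split
    · positivity
    · exact hlam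
  have hb0 : ∀ m < k+1, 0 ≤ b m := fun m hm => (hb m hm).1
  set c : ℕ → ℝ := fun m => ∑ j ∈ (Finset.range (k+1)).erase m, lamInf j * b j with hcdef
  have hsplit : ∀ m < k+1, S = lamInf m * b m + c m := by
    intro m hm
    rw [hS, ← Finset.add_sum_erase _ _ (Finset.mem_range.mpr hm)]
  have hupdate : ∀ m < k+1, ∀ x : ℝ,
      (∑ j ∈ Finset.range (k+1), lamInf j * Function.update b m x j)
        = c m + lamInf m * x := by
    intro m hm x
    rw [← Finset.add_sum_erase _ _ (Finset.mem_range.mpr hm), Function.update_self]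
    have he : ∀ j ∈ (Finset.range (k+1)).erase m,
        lamInf j * Function.update b m x j = lamInf j * b j := by
      intro j hj
      rw [Function.update_of_ne (Finset.ne_of_mem_erase hj)]
    rw [Finset.sum_congr rfl he]
    ring
  have hpayb : ∀ m, rsgPayoff (k+1) lamInf γ b m = lamInf m * b m / S - γ * b m := by
    intro m; rw [rsgPayoff, ← hS]
  have hNE' : ∀ m < k+1, ∀ x ∈ Set.Icc (0:ℝ) ahat,
      lamInf m * x / (c m + lamInf m * x) - γ * x
        ≤ lamInf m * b m / S - γ * b m := by
    intro m hm x hx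
    have h := hNE m hm x hx
    rw [rsgPayoff, hupdate m hm x, Function.update_self, hpayb m] at h
    exact h
  -- Step 1 : c m > 0
  have hcpos : ∀ m < k+1, 0 < c m := by
    intro m hm
    have hnn : 0 ≤ c m := Finset.sum_nonneg (fun j hj => by
      have hj' : j < k+1 := Finset.mem_range.mp (Finset.mem_of_mem_erase hj)
      exact mul_nonneg (hlamInf_pos j).le (hb0 j hj'))
    rcases hnn.lt_or_eq with h | h
    · exact h
    exfalso
    have hc0 : c m = 0 := h.symm
    have hSm : S = lamInf m * b m := by
      have := hsplit m hm; rw [hc0] at this; linarith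
    have hbm : 0 < b m := by
      by_contra hb'
      push_neg at hb'
      have : b m = 0 := le_antisymm hb' (hb0 m hm)
      rw [this, mul_zero] at hSm
      exact absurd hSm.symm hsum.ne
    have hx : b m / 2 ∈ Set.Icc (0:ℝ) ahat := ⟨by linarith, by linarith [(hb m hm).2]⟩
    have h1 := hNE' m hm (b m / 2) hx
    rw [hc0, hSm] at h1
    have hlm := hlamInf_pos m
    have e1 : lamInf m * (b m/2)/(0 + lamInf m*(b m/2)) = 1 := by
      rw [zero_add]; field_simp
    have e2 : lamInf m * b m / (lamInf m * b m) = 1 := by field_simp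
    rw [e1, e2] at h1
    nlinarith
  -- Step 2 : γ b m ≤ 1
  have hble : ∀ m < k+1, γ * b m ≤ 1 := by
    intro m hm
    have h0 := hNE' m hm 0 ⟨le_refl 0, hahat0.le⟩
    simp at h0
    have hshare : lamInf m * b m / S ≤ 1 := by
      rw [div_le_one hsum]
      have := hsplit m hm
      linarith [hcpos m hm]
    linarith
  have hblt : ∀ m < k+1, b m < ahat := by
    intro m hm
    have h1 := hble m hm
    have h2 : b m ≤ 1/γ := by rw [le_div_iff₀ hγ]; linarith [mul_comm γ (b m)]
    have h3 : 1/γ ≤ ((k:ℝ)+1)/γ := by gcongr; linarith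
    linarith
  -- Step 3 : dichotomy
  have dich : ∀ m < k+1, (b m = 0 ∧ lamInf m ≤ γ * S) ∨
      (0 < b m ∧ lamInf m * (S - lamInf m * b m) = γ * S^2) := by
    intro m hm
    rcases eq_or_lt_of_le (hb0 m hm) with he | hlt
    · left
      refine ⟨he.symm, ?_⟩
      have hcS : c m = S := by
        have := hsplit m hm; rw [← he, mul_zero] at this; linarith
      have hmax : ∀ x ∈ Set.Icc (0:ℝ) ahat,
          lamInf m * x/(c m + lamInf m * x) - γ*x ≤ 0 := by
        intro x hx
        have h := hNE' m hm x hx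
        rw [← he] at h
        simpa using h
      have := foc_zero (lamInf m) (c m) γ ahat (hlamInf_pos m) (hcpos m hm) hγ hahat0 hmax
      rwa [hcS] at this
    · right
      refine ⟨hlt, ?_⟩
      have hsp := hsplit m hm
      have hcb : c m + lamInf m * b m = S := by linarith
      have hmax : ∀ x ∈ Set.Icc (0:ℝ) ahat,
          lamInf m * x/(c m + lamInf m * x) - γ*x
            ≤ lamInf m * b m/(c m + lamInf m * b m) - γ*(b m) := by
        intro x hx
        rw [hcb]
        exact hNE' m hm x hx
      have hfoc := foc_interior (lamInf m) (c m) γ (b m) ahat (hlamInf_pos m)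
        (hcpos m hm) hγ hlt (hblt m hm) hmax
      rw [hcb] at hfoc
      have : c m = S - lamInf m * b m := by linarith
      rw [this] at hfoc
      exact hfoc
  -- influence factor values
  have hlam0 : lamInf 0 = η * lam := by rw [hInf]; simp
  have hlamm : ∀ m : ℕ, m ≠ 0 → lamInf m = lam := by
    intro m hm; rw [hInf]; simp [hm]
  -- γ S < lam : the symmetric players are active
  have hSlt : γ * S < lam := by
    by_contra h
    push_neg at h
    have hbz : ∀ j ∈ (Finset.range (k+1)).erase 0, lamInf j * b j = 0 := by
      intro j hj
      have hj0 : j ≠ 0 := Finset.ne_of_mem_erase hj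
      have hjk : j < k+1 := Finset.mem_range.mp (Finset.mem_of_mem_erase hj)
      rcases dich j hjk with ⟨hz, _⟩ | ⟨hpos, heq⟩
      · rw [hz, mul_zero]
      · exfalso
        rw [hlamm j hj0] at heq
        nlinarith [mul_pos (mul_pos hlam hlam) hpos,
          mul_le_mul_of_nonneg_right h hsum.le]
    have hc0 : c 0 = 0 := Finset.sum_eq_zero hbz
    exact absurd hc0 (hcpos 0 (by omega)).ne'
  have hact : ∀ m, 1 ≤ m → m ≤ k → lam * (S - lam * b m) = γ * S^2 := by
    intro m h1 h2
    rcases dich m (by omega) with ⟨_, hle⟩ | ⟨_, heq⟩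
    · rw [hlamm m (by omega)] at hle; linarith
    · rwa [hlamm m (by omega)] at heq
  have hS2 : S = η * lam * b 0 + ∑ i ∈ Finset.range k, lam * b (i+1) := by
    rw [hS, Finset.sum_range_succ', hlam0]
    have he : ∀ i ∈ Finset.range k, lamInf (i+1) * b (i+1) = lam * b (i+1) := by
      intro i _; rw [hlamm (i+1) (by omega)]
    rw [Finset.sum_congr rfl he]
    ring
  have hsumk : lam * (∑ i ∈ Finset.range k, lam * b (i+1))
      = (k:ℝ) * (lam * S - γ * S^2) := by
    rw [Finset.mul_sum]
    have he : ∀ i ∈ Finset.range k, lam * (lam * b (i+1)) = lam * S - γ * S^2 := by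
      intro i hi
      have hik := Finset.mem_range.mp hi
      have h := hact (i+1) (by omega) (by omega)
      linear_combination -h
    rw [Finset.sum_congr rfl he, Finset.sum_const, Finset.card_range, nsmul_eq_mul]
  have E1 : lam * S = lam * (η*lam*b 0) + (k:ℝ)*(lam*S - γ*S^2) := by
    have h := congrArg (fun t => lam * t) hS2
    simp only [mul_add] at h
    rw [hsumk] at h
    exact h
  have h1kη : (0:ℝ) < 1 + (k:ℝ)*η := by positivity
  rcases dich 0 (by omega) with ⟨hb00, hle0⟩ | ⟨hb0pos, heq0⟩
  · -- Case A : adamant player inactive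
    rw [hlam0] at hle0
    rw [hb00] at E1
    have hγS : (k:ℝ) * (γ*S) = ((k:ℝ)-1) * lam := by
      have h2 : ((k:ℝ) * (γ*S)) * S = (((k:ℝ)-1) * lam) * S := by linear_combination E1
      exact mul_right_cancel₀ hsum.ne' h2
    have hcond : ¬(((k:ℝ)-1)/(k:ℝ) < η) := by
      push_neg
      rw [le_div_iff₀ hkpos]
      nlinarith [mul_le_mul_of_nonneg_left hle0 hkpos.le]
    constructor
    · intro m h1 h2
      rw [if_neg hcond, hpayb m, hlamm m (by omega)]
      have h := hact m h1 h2
      have e1 : (k:ℝ)*(lam*(lam * b m)) = lam*S := by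
        linear_combination (-(k:ℝ))*h - S*hγS
      have e2 : (k:ℝ)*(lam*b m) = S := by
        apply mul_left_cancel₀ hlam.ne'
        linear_combination e1
      have e3 : γ*b m*(k:ℝ)^2*lam = ((k:ℝ)-1)*lam := by
        linear_combination (k:ℝ)*γ*e2 + hγS
      have e4 : γ*b m*(k:ℝ)^2 = (k:ℝ)-1 := mul_right_cancel₀ hlam.ne' (by linear_combination e3)
      have e5 : lam * b m / S = 1/(k:ℝ) := by
        rw [div_eq_div_iff hsum.ne' hkpos.ne']
        linear_combination e2
      have e6 : γ * b m = ((k:ℝ)-1)/(k:ℝ)^2 := by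
        rw [eq_div_iff (by positivity)]
        linear_combination e4
      rw [e5, e6]
      field_simp
      ring
    · rw [if_neg hcond, hpayb 0, hb00]
      simp
  · -- Case B : adamant player active
    rw [hlam0] at heq0
    have key2 : (γ*S*(1+(k:ℝ)*η)) * S = ((k:ℝ)*η*lam) * S := by
      linear_combination η*E1 - heq0
    have key : γ*S*(1+(k:ℝ)*η) = (k:ℝ)*η*lam := mul_right_cancel₀ hsum.ne' key2
    have hcond : ((k:ℝ)-1)/(k:ℝ) < η := by
      rw [div_lt_iff₀ hkpos]
      have hu : 0 < η*lam*b 0 := by positivity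
      have hlt : γ*S < η*lam := by nlinarith [heq0, mul_pos (mul_pos hη hlam) hu]
      nlinarith [mul_pos hη hlam, mul_pos (sub_pos.mpr hlt) h1kη]
    constructor
    · intro m h1 h2
      rw [if_pos hcond, hpayb m, hlamm m (by omega)]
      have h := hact m h1 h2
      have e1 : lam*(lam*b m)*(1+(k:ℝ)*η) = lam*S := by
        linear_combination (-(1+(k:ℝ)*η))*h - S*key
      have e2 : (lam*b m)*(1+(k:ℝ)*η) = S := by
        apply mul_left_cancel₀ hlam.ne'
        linear_combination e1
      have e3 : γ*b m*(1+(k:ℝ)*η)^2*lam = (k:ℝ)*η*lam := by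
        linear_combination γ*(1+(k:ℝ)*η)*e2 + key
      have e4 : γ*b m*(1+(k:ℝ)*η)^2 = (k:ℝ)*η := mul_right_cancel₀ hlam.ne' (by linear_combination e3)
      have e5 : lam * b m / S = 1/(1+(k:ℝ)*η) := by
        rw [div_eq_div_iff hsum.ne' h1kη.ne']
        linear_combination e2
      have e6 : γ * b m = (k:ℝ)*η/(1+(k:ℝ)*η)^2 := by
        rw [eq_div_iff (by positivity)]
        linear_combination e4
      rw [e5, e6]
      field_simp
      ring
    · rw [if_pos hcond, hpayb 0, hlam0]
      have f1 : (η*lam)*((η*lam*b 0)*(1+(k:ℝ)*η))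
          = (η*lam)*(S*(1+(k:ℝ)*η-(k:ℝ))) := by
        linear_combination (-(1+(k:ℝ)*η))*heq0 - S*key
      have f2 : (η*lam*b 0)*(1+(k:ℝ)*η) = S*(1+(k:ℝ)*η-(k:ℝ)) :=
        mul_left_cancel₀ (by positivity) f1
      have f5 : η*lam*b 0/S = (1+(k:ℝ)*η-(k:ℝ))/(1+(k:ℝ)*η) := by
        rw [div_eq_div_iff hsum.ne' h1kη.ne']
        linear_combination f2
      have f3 : (γ*b 0*(1+(k:ℝ)*η)^2)*(η*lam) = ((k:ℝ)*(1+(k:ℝ)*η-(k:ℝ)))*(η*lam) := by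
        linear_combination γ*(1+(k:ℝ)*η)*f2 + (1+(k:ℝ)*η-(k:ℝ))*key
      have f4 : γ*b 0*(1+(k:ℝ)*η)^2 = (k:ℝ)*(1+(k:ℝ)*η-(k:ℝ)) :=
        mul_right_cancel₀ (by positivity) f3
      have f6 : γ*b 0 = (k:ℝ)*(1+(k:ℝ)*η-(k:ℝ))/(1+(k:ℝ)*η)^2 := by
        rw [eq_div_iff (by positivity)]
        linear_combination f4
      rw [f5, f6]
      field_simp
      ring
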